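/- Let C ⊆ R_max^d be a tropical cone defined by A·x ≤ B·x and g ∈ C with all coordinates finite. Then g is extreme of type t if and only if for every l ∈ {1,...,d} and every x ∈ T(g,C) ∩ {-∞,0}^d, x_l = -∞ implies x_t = -∞. -/

import Mathlib

open scoped Classical

noncomputable section

/-- The max-plus semiring `ℝ ∪ {-∞}`: addition is `max` (the lattice `⊔`),
multiplication is `+` (with `⊥ + x = ⊥`). -/
abbrev Rmax := WithBot ℝ

/-- Tropical "dot product" `a·x = max_i (a_i + x_i)`. -/
def dotp {d : ℕ} (a x : Fin d → Rmax) : Rmax := Finset.univ.sup fun i => a i + x i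

/-- A tropical (polyhedral) cone: closed under coordinatewise max and
tropical scalar multiplication (adding a scalar to every coordinate). -/
def IsTropCone {d : ℕ} (C : Set (Fin d → Rmax)) : Prop :=
  (∀ x ∈ C, ∀ y ∈ C, x ⊔ y ∈ C) ∧ (∀ x ∈ C, ∀ lam : Rmax, (fun i => lam + x i) ∈ C)

/-- `g` is extreme in `C`: `g ∈ C` and `g = v ⊔ w` with `v, w ∈ C` forces `g = v` or `g = w`. -/
def TropExtreme {ι : Type*} (C : Set (ι → Rmax)) (g : ι → Rmax) : Prop :=
  g ∈ C ∧ ∀ v ∈ C, ∀ w ∈ C, g = v ⊔ w → g = v ∨ g = w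

/-- `g` is extreme of type `t` in `C`: `g` is minimal in `{x ∈ C | x t = g t}`. -/
def ExtremeType {ι : Type*} (C : Set (ι → Rmax)) (g : ι → Rmax) (t : ι) : Prop :=
  g ∈ C ∧ ∀ x ∈ C, x ≤ g → x t = g t → x = g

/-- The tropical cone defined by the system of inequalities `A·x ≤ B·x`. -/
def coneOf {d n : ℕ} (A B : Fin n → Fin d → Rmax) : Set (Fin d → Rmax) :=
  { x | ∀ k, dotp (A k) x ≤ dotp (B k) x }

/-- `argmax(c·g) = {i | c_i + g_i = c·g}`. -/
def argmaxSet {d : ℕ} (c g : Fin d → Rmax) : Finset (Fin d) :=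
  Finset.univ.filter fun i => c i + g i = dotp c g

/-- The tangent cone of `{x | A·x ≤ B·x}` at `g`. -/
def tangentCone {d n : ℕ} (A B : Fin n → Fin d → Rmax) (g : Fin d → Rmax) :
    Set (Fin d → Rmax) :=
  { x | ∀ k, dotp (A k) g = dotp (B k) g →
      (argmaxSet (A k) g).sup x ≤ (argmaxSet (B k) g).sup x }

-- helper lemmas

lemma dotp_mono {d : ℕ} (c : Fin d → Rmax) {x y : Fin d → Rmax} (h : x ≤ y) :
    dotp c x ≤ dotp c y :=
  Finset.sup_mono_fun fun i _ => add_le_add_right (h i) _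

lemma le_dotp {d : ℕ} (c x : Fin d → Rmax) (i : Fin d) : c i + x i ≤ dotp c x :=
  Finset.le_sup (f := fun j => c j + x j) (Finset.mem_univ i)

lemma dotp_le_iff {d : ℕ} {c x : Fin d → Rmax} {m : Rmax} :
    dotp c x ≤ m ↔ ∀ i, c i + x i ≤ m := by
  simp [dotp, Finset.sup_le_iff]

lemma exists_eq_dotp {d : ℕ} [Nonempty (Fin d)] (c x : Fin d → Rmax) :
    ∃ i, dotp c x = c i + x i := by
  obtain ⟨i, -, h⟩ := Finset.exists_mem_eq_sup Finset.univ Finset.univ_nonempty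
    fun i => c i + x i
  exact ⟨i, h⟩

lemma add_dotp_le {d : ℕ} [Nonempty (Fin d)] (a : Rmax) (c x y : Fin d → Rmax)
    (h : ∀ i, a + x i ≤ y i) : a + dotp c x ≤ dotp c y := by
  obtain ⟨i, hi⟩ := exists_eq_dotp c x
  calc a + dotp c x = c i + (a + x i) := by rw [hi, add_left_comm]
    _ ≤ c i + y i := add_le_add_right (h i) _
    _ ≤ dotp c y := le_dotp c y i

lemma mem_argmaxSet {d : ℕ} {c g : Fin d → Rmax} {i : Fin d} :
    i ∈ argmaxSet c g ↔ c i + g i = dotp c g := by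
  simp [argmaxSet]

/-- Prop.: `g` (all coordinates finite) is extreme of type `t` iff for every
`l` and every `{-∞,0}`-vector `x` in the tangent cone, `x l = -∞ → x t = -∞`. -/
theorem stmt8 {d n : ℕ} (A B : Fin n → Fin d → Rmax) (g' : Fin d → ℝ) (t : Fin d)
    (hg : (fun i => ((g' i : ℝ) : Rmax)) ∈ coneOf A B) :
    ExtremeType (coneOf A B) (fun i => ((g' i : ℝ) : Rmax)) t ↔
      ∀ l : Fin d, ∀ x ∈ tangentCone A B (fun i => ((g' i : ℝ) : Rmax)),
        (∀ i, x i = ⊥ ∨ x i = 0) → x l = ⊥ → x t = ⊥ := by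
  have : Nonempty (Fin d) := ⟨t⟩
  set g : Fin d → Rmax := fun i => ((g' i : ℝ) : Rmax) with hgdef
  constructor
  · -- forward
    rintro ⟨-, hmin⟩ l x hxT hx01 hxl
    by_contra hxt
    have hxt0 : x t = 0 := (hx01 t).resolve_left hxt
    -- the perturbed vector
    set y : ℝ → Fin d → Rmax :=
      fun ε i => if x i = 0 then g i else (((g' i - ε : ℝ)) : Rmax) with hydef
    have hyle : ∀ ε : ℝ, 0 < ε → y ε ≤ g := by
      intro ε hε i
      by_cases h : x i = 0
      · simp [hydef, h, hgdef]
      · simp only [hydef, h, if_false, hgdef, WithBot.coe_le_coe]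
        linarith
    have hylow : ∀ ε : ℝ, 0 < ε → ∀ i, ((-ε : ℝ) : Rmax) + g i ≤ y ε i := by
      intro ε hε i
      by_cases h : x i = 0
      · simp only [hydef, h, if_true, hgdef, ← WithBot.coe_add, WithBot.coe_le_coe]
        linarith
      · simp only [hydef, h, if_false, hgdef, ← WithBot.coe_add, WithBot.coe_le_coe]
        linarith
    -- per-row bound
    have lowB : ∀ (c : Fin d → Rmax) (ε : ℝ), 0 < ε →
        ((-ε : ℝ) : Rmax) + dotp c g ≤ dotp c (y ε) := by
      intro c ε hε
      exact add_dotp_le _ _ _ _ (hylow ε hε)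
    have upA : ∀ (c : Fin d → Rmax) (ε : ℝ), 0 < ε → dotp c (y ε) ≤ dotp c g := by
      intro c ε hε
      exact dotp_mono _ (hyle ε hε)
    have botcase : ∀ k : Fin n, dotp (A k) g = ⊥ → ∀ ε : ℝ,
        dotp (A k) (y ε) ≤ dotp (B k) (y ε) := by
      intro k hbot ε
      have hA : ∀ i, A k i = ⊥ := by
        intro i
        have h := (Finset.sup_eq_bot_iff _ _).1 hbot i (Finset.mem_univ i)
        rcases WithBot.add_eq_bot.1 h with h' | h'
        · exact h'
        · exact absurd h' (by simp [hgdef])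
      have : dotp (A k) (y ε) ≤ ⊥ := dotp_le_iff.2 fun i => by simp [hA i]
      exact le_trans this bot_le
    have hrow : ∀ k : Fin n, ∃ ε₀ : ℝ, 0 < ε₀ ∧ ∀ ε : ℝ, 0 < ε → ε ≤ ε₀ →
        dotp (A k) (y ε) ≤ dotp (B k) (y ε) := by
      intro k
      rcases eq_or_ne (dotp (A k) g) ⊥ with hbot | hne
      · exact ⟨1, one_pos, fun ε hε _ => botcase k hbot ε⟩
      obtain ⟨m, hm⟩ := WithBot.ne_bot_iff_exists.1 hne
      rcases eq_or_lt_of_le (hg k) with heq | hlt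
      · -- tight row
        have hsup := hxT k heq
        by_cases hcase : ∃ i ∈ argmaxSet (A k) g, x i = 0
        · -- some argmax-A coordinate survives
          obtain ⟨i, hi, hxi⟩ := hcase
          have h0 : (0 : Rmax) ≤ (argmaxSet (B k) g).sup x := by
            refine le_trans ?_ hsup
            calc (0 : Rmax) = x i := hxi.symm
              _ ≤ _ := Finset.le_sup hi
          have hj : ∃ j ∈ argmaxSet (B k) g, x j ≠ ⊥ := by
            by_contra hc
            push_neg at hc
            have : (argmaxSet (B k) g).sup x = ⊥ := (Finset.sup_eq_bot_iff _ _).2 hc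
            rw [this] at h0
            simp at h0
          obtain ⟨j, hjmem, hjne⟩ := hj
          have hxj0 : x j = 0 := (hx01 j).resolve_left hjne
          refine ⟨1, one_pos, fun ε hε _ => ?_⟩
          calc dotp (A k) (y ε) ≤ dotp (A k) g := upA _ ε hε
            _ = B k j + g j := by rw [heq, (mem_argmaxSet.1 hjmem)]
            _ = B k j + y ε j := by simp [hydef, hxj0]
            _ ≤ dotp (B k) (y ε) := le_dotp _ _ _
        · -- all argmax-A coordinates are killed
          push_neg at hcase
          set N : Rmax := (Finset.univ.filter
            (fun i => i ∉ argmaxSet (A k) g)).sup (fun i => A k i + g i) with hNdef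
          have hNlt : N < (m : Rmax) := by
            rw [Finset.sup_lt_iff (by simp : (⊥ : Rmax) < (m : Rmax))]
            intro i hi
            rw [Finset.mem_filter] at hi
            have h1 : A k i + g i ≤ (m : Rmax) := hm ▸ le_dotp _ _ _
            have h2 : A k i + g i ≠ (m : Rmax) := by
              intro h
              exact hi.2 (mem_argmaxSet.2 (by rw [h, hm]))
            exact lt_of_le_of_ne h1 h2
          have key : ∀ ε₀ : ℝ, 0 < ε₀ → N ≤ ((m - ε₀ : ℝ) : Rmax) →
              ∀ ε : ℝ, 0 < ε → ε ≤ ε₀ → dotp (A k) (y ε) ≤ dotp (B k) (y ε) := by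
            intro ε₀ hε₀ hNle ε hε hεle
            have hup : dotp (A k) (y ε) ≤ ((m - ε : ℝ) : Rmax) := by
              rw [dotp_le_iff]
              intro i
              by_cases hi : i ∈ argmaxSet (A k) g
              · have hxi : x i = ⊥ := (hx01 i).resolve_right (hcase i hi)
                have hyi : y ε i = ((g' i - ε : ℝ) : Rmax) := by
                  simp [hydef, hxi]
                have hsum : A k i + g i = (m : Rmax) := by
                  rw [mem_argmaxSet.1 hi, hm]
                have hAne : A k i ≠ ⊥ := by
                  intro h; rw [h] at hsum; simp at hsum
                obtain ⟨a, ha⟩ := WithBot.ne_bot_iff_exists.1 hAne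
                have hag : a + g' i = m := by
                  rw [← ha, hgdef] at hsum
                  simp only [← WithBot.coe_add] at hsum
                  exact_mod_cast hsum
                rw [hyi, ← ha, ← WithBot.coe_add, WithBot.coe_le_coe]
                linarith
              · have hle1 : A k i + y ε i ≤ A k i + g i :=
                  add_le_add_right (hyle ε hε i) _
                have hle2 : A k i + g i ≤ N := by
                  rw [hNdef]
                  exact Finset.le_sup (f := fun i => A k i + g i)
                    (Finset.mem_filter.2 ⟨Finset.mem_univ i, hi⟩)
                refine le_trans hle1 (le_trans hle2 (le_trans hNle ?_))
                exact_mod_cast (by linarith : m - ε₀ ≤ m - ε)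
            refine le_trans hup ?_
            have := lowB (B k) ε hε
            rw [← heq, ← hm, ← WithBot.coe_add] at this
            calc ((m - ε : ℝ) : Rmax) = ((-ε + m : ℝ) : Rmax) := by
                  rw [show m - ε = -ε + m from by ring]
              _ ≤ dotp (B k) (y ε) := this
          rcases eq_or_ne N ⊥ with hNbot | hNne
          · refine ⟨1, one_pos, key 1 one_pos (by rw [hNbot]; exact bot_le)⟩
          · obtain ⟨ν, hν⟩ := WithBot.ne_bot_iff_exists.1 hNne
            have hνm : ν < m := by
              rw [← hν] at hNlt
              exact_mod_cast hNlt
            refine ⟨m - ν, by linarith, key (m - ν) (by linarith) ?_⟩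
            rw [← hν]
            exact_mod_cast le_of_eq (by ring)
      · -- slack row
        have hBne : dotp (B k) g ≠ ⊥ := fun h => by
          rw [h] at hlt; exact absurd hlt (by simp)
        obtain ⟨b, hb⟩ := WithBot.ne_bot_iff_exists.1 hBne
        have hab : m < b := by
          rw [← hm, ← hb] at hlt
          exact_mod_cast hlt
        refine ⟨b - m, by linarith, fun ε hε hεle => ?_⟩
        have h1 : dotp (A k) (y ε) ≤ (m : Rmax) := hm ▸ upA _ ε hε
        have h2 : ((-ε + b : ℝ) : Rmax) ≤ dotp (B k) (y ε) := by
          have := lowB (B k) ε hε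
          rwa [← hb, ← WithBot.coe_add] at this
        refine le_trans h1 (le_trans ?_ h2)
        exact_mod_cast (by linarith : m ≤ -ε + b)
    choose ε₀ hε₀pos hε₀spec using hrow
    obtain ⟨ε, hεpos, hεle⟩ : ∃ ε : ℝ, 0 < ε ∧ ∀ k, ε ≤ ε₀ k := by
      obtain ⟨e, hemem, hele⟩ := Finset.exists_min_image
        (insert 1 (Finset.image ε₀ Finset.univ)) id ⟨1, Finset.mem_insert_self _ _⟩
      refine ⟨e, ?_, fun k => hele _ (Finset.mem_insert_of_mem
        (Finset.mem_image_of_mem ε₀ (Finset.mem_univ k)))⟩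
      rcases Finset.mem_insert.1 hemem with h | h
      · rw [h]; exact one_pos
      · obtain ⟨k, -, hk⟩ := Finset.mem_image.1 h
        rw [← hk]; exact hε₀pos k
    have hymem : y ε ∈ coneOf A B := fun k => hε₀spec k ε hεpos (hεle k)
    have hyt : y ε t = g t := by simp [hydef, hxt0]
    have hyg : y ε = g := hmin (y ε) hymem (hyle ε hεpos) hyt
    have hyl := congrFun hyg l
    have hxl' : ¬ x l = 0 := by rw [hxl]; simp
    rw [hydef] at hyl
    simp only [hxl', if_false, hgdef] at hyl
    rw [WithBot.coe_inj] at hyl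
    linarith
  · -- backward
    intro H
    refine ⟨hg, fun x hxC hxle hxt => ?_⟩
    by_contra hne
    obtain ⟨l, hl⟩ : ∃ l, x l ≠ g l := by
      by_contra h; push_neg at h; exact hne (funext h)
    set u : Fin d → Rmax := fun i => if x i = g i then (0 : Rmax) else ⊥ with hudef
    have huT : u ∈ tangentCone A B g := by
      intro k hk
      rcases eq_or_ne (dotp (A k) g) ⊥ with hbot | hne
      on_goal 2 => obtain ⟨m, hm⟩ := WithBot.ne_bot_iff_exists.1 hne
      · -- both argmax sets are univ
        have hA : argmaxSet (A k) g = Finset.univ := by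
          ext i
          simp only [mem_argmaxSet, Finset.mem_univ, iff_true, hbot]
          exact (Finset.sup_eq_bot_iff _ _).1 hbot i (Finset.mem_univ i)
        have hB : argmaxSet (B k) g = Finset.univ := by
          ext i
          simp only [mem_argmaxSet, Finset.mem_univ, iff_true, ← hk, hbot]
          exact (Finset.sup_eq_bot_iff _ _).1 (hk ▸ hbot) i (Finset.mem_univ i)
        rw [hA, hB]
      · apply Finset.sup_le
        intro i hi
        by_cases hxi : x i = g i
        · -- find j in argmax B with x j = g j
          have h1 : (m : Rmax) ≤ dotp (A k) x := by
            have hii := mem_argmaxSet.1 hi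
            calc (m : Rmax) = A k i + g i := by rw [hii, ← hm]
              _ = A k i + x i := by rw [hxi]
              _ ≤ dotp (A k) x := le_dotp _ _ _
          have h2 : dotp (B k) x = (m : Rmax) := by
            refine le_antisymm ?_ (le_trans h1 (hxC k))
            calc dotp (B k) x ≤ dotp (B k) g := dotp_mono _ hxle
              _ = m := by rw [← hk, ← hm]
          obtain ⟨j, hj⟩ := exists_eq_dotp (B k) x
          have hjm : B k j + x j = (m : Rmax) := by rw [← hj, h2]
          have hjg : B k j + g j = (m : Rmax) := by
            refine le_antisymm ?_ ?_
            · calc B k j + g j ≤ dotp (B k) g := le_dotp _ _ _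
                _ = m := by rw [← hk, ← hm]
            · rw [← hjm]; exact add_le_add_right (hxle j) _
          have hBkj : B k j ≠ ⊥ := by
            intro h; rw [h] at hjm; simp at hjm
          have hxjg : x j = g j :=
            WithBot.add_left_cancel hBkj (hjm.trans hjg.symm)
          have hjmem : j ∈ argmaxSet (B k) g := by
            rw [mem_argmaxSet, hjg, ← hk, ← hm]
          calc u i ≤ 0 := by by_cases h : x i = g i <;> simp [hudef, h]
            _ = u j := by simp [hudef, hxjg]
            _ ≤ _ := Finset.le_sup hjmem
        · simp [hudef, hxi]
    have hul : u l = ⊥ := by simp [hudef, hl]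
    have := H l u huT (fun i => by by_cases h : x i = g i <;> simp [hudef, h]) hul
    rw [hudef] at this
    simp only [hxt, if_pos rfl] at this
    exact (by simp : (0 : Rmax) ≠ ⊥) this
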